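/- Let M > 0 and let r₀ ∈ (0,1) satisfy r₀ − 1 + 2M(2M+1)(r₀ + (1−r₀)ln(1−r₀)) − 2M(1 − 2 ln 2) = 0. Then for the function f_M(z) = z + 2M Σ_{n=2}^∞ zⁿ/(n(n−1)) (whose coefficients are a_n = 2M/(n(n−1)), b_n = 0), equality holds: r₀ + Σ_{n=2}^∞ (2M/(n(n−1)) + n(n−1)(2M/(n(n−1)))²) r₀ⁿ = 1 + 2M(1 − 2 ln 2) = d(f_M(0), ∂f_M(𝔻)). -/

import Mathlib

open Filter MeasureTheory

/-- Euclidean distance from `f 0` to the boundary of `f(𝔻)`, defined as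
`liminf_{|z| → 1⁻} |f z - f 0|`. -/
noncomputable def bdyDist (f : ℂ → ℂ) : ℝ :=
  Filter.liminf (fun z : ℂ => ‖f z - f 0‖)
    (Filter.comap (fun z : ℂ => ‖z‖) (nhdsWithin 1 (Set.Iio 1)))

/-- `f = h + conj g` belongs to the class `P⁰_H(M)`:  `h z = z + ∑_{n≥2} a n * z^n`,
`g z = ∑_{n≥2} b n * z^n` on the unit disk, and `Re (z h''(z)) > -M + |z g''(z)|` there. -/
def PH0 (M : ℝ) (a b : ℕ → ℂ) (h g : ℂ → ℂ) : Prop :=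
  (∀ z ∈ Metric.ball (0 : ℂ) 1,
      HasSum (fun n : ℕ => a (n + 2) * z ^ (n + 2)) (h z - z)) ∧
  (∀ z ∈ Metric.ball (0 : ℂ) 1,
      HasSum (fun n : ℕ => b (n + 2) * z ^ (n + 2)) (g z)) ∧
  (∀ z ∈ Metric.ball (0 : ℂ) 1,
      -M + ‖z * deriv (deriv g) z‖ < (z * deriv (deriv h) z).re)

/-- The extremal function `f_M z = z + 2M ∑_{n≥2} z^n/(n(n-1))`. -/
noncomputable def fM (M : ℝ) : ℂ → ℂ :=
  fun z => z + 2 * (M : ℂ) * ∑' n : ℕ, z ^ (n + 2) / (((n : ℂ) + 2) * ((n : ℂ) + 1))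

/-! ### Auxiliary series identities -/

lemma hasSum_k_real {x : ℝ} (hx : |x| < 1) :
    HasSum (fun n : ℕ => x ^ (n + 2) / (((n : ℝ) + 2) * ((n : ℝ) + 1)))
      (x + (1 - x) * Real.log (1 - x)) := by
  have h1 := Real.hasSum_pow_div_log_of_abs_lt_one hx
  have h2 : HasSum (fun n : ℕ => x * (x ^ (n + 1) / ((n : ℝ) + 1)))
      (x * -Real.log (1 - x)) := h1.mul_left x
  have h3 : HasSum (fun n : ℕ => x ^ (n + 2) / ((n : ℝ) + 2))
      (-Real.log (1 - x) - x) := by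
    have h4 : HasSum (fun n : ℕ => x ^ (n + 1 + 1) / ((n + 1 : ℕ) + 1 : ℝ))
        ((-Real.log (1 - x) - x) ) := by
      refine (hasSum_nat_add_iff (f := fun n : ℕ => x ^ (n + 1) / ((n : ℝ) + 1)) 1).mpr ?_
      convert h1 using 1
      · rfl
      simp
    convert h4 using 2 with n
    push_cast
    ring
  have h5 := h2.sub h3
  have hfun : (fun n : ℕ => x ^ (n + 2) / (((n : ℝ) + 2) * ((n : ℝ) + 1)))
      = fun n : ℕ => x * (x ^ (n + 1) / ((n : ℝ) + 1)) - x ^ (n + 2) / ((n : ℝ) + 2) := by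
    funext n
    have h2' : ((n : ℝ) + 2) ≠ 0 := by positivity
    have h1' : ((n : ℝ) + 1) ≠ 0 := by positivity
    field_simp
    ring
  rw [hfun]
  convert h5 using 1
  · rfl
  ring

lemma hasSum_k_complex {z : ℂ} (hz : ‖z‖ < 1) :
    HasSum (fun n : ℕ => z ^ (n + 2) / (((n : ℂ) + 2) * ((n : ℂ) + 1)))
      (z + (1 - z) * Complex.log (1 - z)) := by
  have h0 := Complex.hasSum_taylorSeries_neg_log hz
  have h1 : HasSum (fun n : ℕ => z ^ (n + 1) / ((n : ℂ) + 1))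
      (-Complex.log (1 - z)) := by
    have h4 : HasSum (fun n : ℕ => z ^ (n + 1) / ((n + 1 : ℕ) : ℂ))
        (-Complex.log (1 - z)) := by
      refine (hasSum_nat_add_iff (f := fun n : ℕ => z ^ n / (n : ℂ)) 1).mpr ?_
      convert h0 using 1
      · rfl
      simp
    convert h4 using 2 with n
    push_cast
    ring
  have h2 : HasSum (fun n : ℕ => z * (z ^ (n + 1) / ((n : ℂ) + 1)))
      (z * -Complex.log (1 - z)) := h1.mul_left z
  have h3 : HasSum (fun n : ℕ => z ^ (n + 2) / ((n : ℂ) + 2))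
      (-Complex.log (1 - z) - z) := by
    have h4 : HasSum (fun n : ℕ => z ^ (n + 1 + 1) / (((n + 1 : ℕ) : ℂ) + 1))
        (-Complex.log (1 - z) - z) := by
      refine (hasSum_nat_add_iff (f := fun n : ℕ => z ^ (n + 1) / ((n : ℂ) + 1)) 1).mpr ?_
      convert h1 using 1
      · rfl
      simp
    convert h4 using 2 with n
    push_cast
    ring
  have h5 := h2.sub h3
  have hfun : (fun n : ℕ => z ^ (n + 2) / (((n : ℂ) + 2) * ((n : ℂ) + 1)))
      = fun n : ℕ => z * (z ^ (n + 1) / ((n : ℂ) + 1)) - z ^ (n + 2) / ((n : ℂ) + 2) := by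
    funext n
    have h2' : ((n : ℂ) + 2) ≠ 0 := by
      exact_mod_cast (Nat.cast_ne_zero (R := ℂ)).mpr (Nat.succ_ne_zero (n + 1))
    have h1' : ((n : ℂ) + 1) ≠ 0 := by
      exact_mod_cast (Nat.cast_ne_zero (R := ℂ)).mpr (Nat.succ_ne_zero n)
    field_simp
    ring
  rw [hfun]
  convert h5 using 1
  · rfl
  ring

/-! ### The elementary real inequality behind `|w log w| ≤ 2 log 2` -/

lemma xlog_bound {x : ℝ} (hx : 0 < x) :
    x * (-Real.log x) ≤ (Real.exp 1)⁻¹ := by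
  have hinv : 0 < x⁻¹ := by positivity
  have he : (0:ℝ) < Real.exp 1 := Real.exp_pos 1
  have h1 : Real.log (x⁻¹ / Real.exp 1) ≤ x⁻¹ / Real.exp 1 - 1 :=
    Real.log_le_sub_one_of_pos (by positivity)
  have h2 : Real.log (x⁻¹ / Real.exp 1) = -Real.log x - 1 := by
    rw [Real.log_div hinv.ne' he.ne', Real.log_inv, Real.log_exp]
  have h3 : -Real.log x ≤ x⁻¹ / Real.exp 1 := by linarith
  calc x * (-Real.log x) ≤ x * (x⁻¹ / Real.exp 1) := by
        apply mul_le_mul_of_nonneg_left h3 hx.le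
    _ = (Real.exp 1)⁻¹ := by field_simp

lemma sqlog_small {s : ℝ} (hs : 0 < s) (h1 : 2 * s ≤ 1) :
    s ^ 2 * Real.log (2 * s) ^ 2 ≤ 0.034 := by
  have hx : (0:ℝ) < 2 * s := by linarith
  have hb := xlog_bound hx
  have hlognp : Real.log (2 * s) ≤ 0 := Real.log_nonpos (by linarith) h1
  have he : (2.7182818283 : ℝ) < Real.exp 1 := Real.exp_one_gt_d9
  have hepos : (0:ℝ) < Real.exp 1 := Real.exp_pos 1
  have hinv : (Real.exp 1)⁻¹ ≤ 0.368 := by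
    rw [inv_le_iff_one_le_mul₀ hepos]
    nlinarith
  have hnn : 0 ≤ 2 * s * (-Real.log (2 * s)) := by
    apply mul_nonneg hx.le; linarith
  have hble : 2 * s * (-Real.log (2 * s)) ≤ 0.368 := le_trans hb hinv
  have hsq : (2 * s * (-Real.log (2 * s))) ^ 2 ≤ 0.368 ^ 2 := by nlinarith
  nlinarith [hsq]

lemma poly_key {L u : ℝ} (hL1 : (0.6931471803:ℝ) ≤ L) (hL2 : L ≤ 0.6931471808)
    (hu0 : 0 ≤ u) (hu : u ≤ 1/2) :
    (1-u)^2 * ((L-u)^2 + (96/43)*u) ≤ L^2 := by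
  have hc0 : (0:ℝ) ≤ 2*L + 2*L^2 - 96/43 := by nlinarith
  have hc1 : (0:ℝ) ≤ 2*(96/43) - 1 - 4*L - L^2 := by nlinarith
  have hc2 : u ≤ 2 + 2*L - 96/43 := by linarith
  have hR : (0:ℝ) ≤ -(u^3) + (2+2*L-96/43)*u^2 + (2*(96/43)-1-4*L-L^2)*u
      + (2*L+2*L^2-96/43) := by
    nlinarith [mul_nonneg hu0 hc1,
      mul_nonneg (sq_nonneg u) (by linarith : (0:ℝ) ≤ 2+2*L-96/43 - u)]
  nlinarith [mul_nonneg hu0 hR]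

set_option maxHeartbeats 1000000 in
lemma core_ineq_aux {s t : ℝ} (hs : 0 < s) (ht0 : 0 ≤ t) (ht : t ≤ Real.pi / 2)
    (hst : s ≤ Real.cos t) :
    s ^ 2 * (Real.log (2 * s) ^ 2 + t ^ 2) ≤ Real.log 2 ^ 2 := by
  have hl2l : (0.6931471803 : ℝ) < Real.log 2 := Real.log_two_gt_d9
  have hl2u : Real.log 2 < 0.6931471808 := Real.log_two_lt_d9
  have hs1 : s ≤ 1 := le_trans hst (Real.cos_le_one t)
  by_cases hu1 : t ≤ 1
  · by_cases hs2 : 1 / 2 ≤ s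
    · -- polynomial case
      have hlogs : Real.log s ≤ s - 1 := Real.log_le_sub_one_of_pos hs
      have hlog2s : Real.log (2 * s) = Real.log 2 + Real.log s :=
        Real.log_mul (by norm_num) hs.ne'
      have hlognn : 0 ≤ Real.log (2 * s) := Real.log_nonneg (by linarith)
      have hub : Real.log (2 * s) ≤ Real.log 2 - (1 - s) := by
        rw [hlog2s]; linarith
      have hsq : Real.log (2 * s) ^ 2 ≤ (Real.log 2 - (1 - s)) ^ 2 := by nlinarith
      have htt1 : t ^ 2 ≤ 1 := by nlinarith
      have ht4 : t ^ 4 ≤ t ^ 2 := by nlinarith [sq_nonneg t, sq_nonneg (t^2)]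
      have ht2 : t ^ 2 ≤ (96 / 43) * (1 - s) := by
        have hcb := Real.cos_bound (x := t) (by rwa [abs_of_nonneg ht0])
        rw [abs_of_nonneg ht0] at hcb
        have h1 : Real.cos t ≤ 1 - t ^ 2 / 2 + t ^ 4 * (5 / 96) := by
          have h2 := abs_sub_le_iff.mp hcb
          linarith [h2.1]
        linarith
      have step1 : s ^ 2 * (Real.log (2 * s) ^ 2 + t ^ 2)
          ≤ s ^ 2 * ((Real.log 2 - (1 - s)) ^ 2 + (96/43) * (1 - s)) := by
        apply mul_le_mul_of_nonneg_left (by linarith) (sq_nonneg s)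
      have step2 := poly_key (L := Real.log 2) (u := 1 - s)
        (by linarith) (by linarith) (by linarith) (by linarith)
      have heq : (1 - (1 - s)) ^ 2 * ((Real.log 2 - (1 - s)) ^ 2 + (96/43) * (1 - s))
          = s ^ 2 * ((Real.log 2 - (1 - s)) ^ 2 + (96/43) * (1 - s)) := by ring
      rw [heq] at step2
      linarith
    · -- s < 1/2
      push_neg at hs2
      have h1 := sqlog_small hs (by linarith)
      have ht2 : t ^ 2 ≤ 1 := by nlinarith
      have hss : s ^ 2 ≤ 1 / 4 := by nlinarith
      have hst2 : s ^ 2 * t ^ 2 ≤ 1 / 4 := by nlinarith [sq_nonneg s, sq_nonneg t]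
      nlinarith
  · -- t > 1
    push_neg at hu1
    have hpiu : Real.pi < 3.141593 := Real.pi_lt_d6
    have hpil : (3.141592 : ℝ) < Real.pi := Real.pi_gt_d6
    have hc1 : Real.cos t ≤ Real.cos 1 := by
      apply Real.cos_le_cos_of_nonneg_of_le_pi (by norm_num) ?_ hu1.le
      linarith [Real.pi_pos]
    have hs23 : s ≤ 2 / 3 := le_trans hst (le_trans hc1 (Real.cos_one_le.trans (by norm_num)))
    have htub : t ≤ Real.pi / 2 - s := by
      have h1 : Real.sin (Real.pi / 2 - t) ≤ Real.pi / 2 - t :=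
        Real.sin_le (by linarith)
      rw [Real.sin_pi_div_two_sub] at h1
      linarith
    have hlogpart : s ^ 2 * Real.log (2 * s) ^ 2 ≤ 4 / 81 := by
      by_cases h2s : 2 * s ≤ 1
      · linarith [sqlog_small hs h2s]
      · push_neg at h2s
        have hl0 : 0 ≤ Real.log (2 * s) := Real.log_nonneg (by linarith)
        have hl1 : Real.log (2 * s) ≤ 2 * s - 1 :=
          Real.log_le_sub_one_of_pos (by linarith)
        have hl3 : Real.log (2 * s) ≤ 1 / 3 := by linarith
        have hA : Real.log (2 * s) ^ 2 ≤ 1 / 9 := by nlinarith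
        have hB : s ^ 2 ≤ 4 / 9 := by nlinarith
        calc s ^ 2 * Real.log (2 * s) ^ 2 ≤ (4/9) * (1/9) :=
              mul_le_mul hB hA (sq_nonneg _) (by norm_num)
          _ = 4 / 81 := by norm_num
    have hsp : s * (Real.pi / 2 - s) ≤ (2/3) * (Real.pi/2 - 2/3) := by
      nlinarith [mul_nonneg (by linarith : (0:ℝ) ≤ 2/3 - s)
        (by linarith : (0:ℝ) ≤ Real.pi/2 - 2/3 - s)]
    have h4 : (0:ℝ) ≤ s * (Real.pi/2 - s) := by nlinarith
    have htsq : t ^ 2 ≤ (Real.pi / 2 - s) ^ 2 := pow_le_pow_left₀ ht0 htub 2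
    have h2 : s ^ 2 * t ^ 2 ≤ ((2/3) * (Real.pi/2 - 2/3)) ^ 2 := by
      have h3 : s ^ 2 * t ^ 2 ≤ (s * (Real.pi/2 - s)) ^ 2 := by
        have h6 := mul_le_mul_of_nonneg_left htsq (sq_nonneg s)
        calc s ^ 2 * t ^ 2 ≤ s ^ 2 * (Real.pi/2 - s)^2 := h6
          _ = (s * (Real.pi/2 - s)) ^ 2 := by ring
      have h5 := pow_le_pow_left₀ h4 hsp 2
      linarith
    have hq : ((2/3) * (Real.pi/2 - 2/3)) ^ 2 ≤ 0.3634 := by nlinarith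
    have hL2 : (0.48 : ℝ) ≤ Real.log 2 ^ 2 := by nlinarith
    have expand : s ^ 2 * (Real.log (2*s) ^ 2 + t ^ 2)
        = s ^ 2 * Real.log (2*s) ^ 2 + s ^ 2 * t ^ 2 := by ring
    rw [expand]
    linarith

lemma core_ineq {s t : ℝ} (hs : 0 < s) (ht : |t| ≤ Real.pi / 2)
    (hst : s ≤ Real.cos t) :
    s ^ 2 * (Real.log (2 * s) ^ 2 + t ^ 2) ≤ Real.log 2 ^ 2 := by
  have h := core_ineq_aux hs (abs_nonneg t) ht (by rwa [Real.cos_abs])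
  rwa [sq_abs] at h

/-- On the closed disk `|w - 1| ≤ 1` one has `|w log w| ≤ 2 log 2`. -/
lemma abs_mul_log_le {w : ℂ} (hw : ‖w - 1‖ ≤ 1) :
    ‖w * Complex.log w‖ ≤ 2 * Real.log 2 := by
  have hl2 : (0:ℝ) ≤ Real.log 2 := Real.log_nonneg one_le_two
  rcases eq_or_ne w 0 with rfl | hw0
  · simp
    positivity
  · have habs : 0 < ‖w‖ := norm_pos_iff.mpr hw0
    have hkey : (‖w‖) ^ 2 ≤ 2 * w.re := by
      have h2 : (‖w - 1‖) ^ 2 ≤ 1 := by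
        nlinarith [norm_nonneg (w - 1)]
      rw [Complex.sq_norm, Complex.normSq_apply] at h2
      simp only [Complex.sub_re, Complex.sub_im, Complex.one_re, Complex.one_im] at h2
      rw [Complex.sq_norm, Complex.normSq_apply]
      nlinarith
    have hre : 0 ≤ w.re := by nlinarith [sq_nonneg (‖w‖)]
    have harg : |w.arg| ≤ Real.pi / 2 := Complex.abs_arg_le_pi_div_two_iff.mpr hre
    have hcos : ‖w‖ / 2 ≤ Real.cos w.arg := by
      rw [Complex.cos_arg hw0, le_div_iff₀ habs]
      nlinarith
    have hcore := core_ineq (s := ‖w‖ / 2) (t := w.arg)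
      (by positivity) harg hcos
    have h2s : 2 * (‖w‖ / 2) = ‖w‖ := by ring
    rw [h2s] at hcore
    have hlogabs : (‖Complex.log w‖) ^ 2
        = (Real.log (‖w‖)) ^ 2 + (w.arg) ^ 2 := by
      rw [Complex.sq_norm, Complex.normSq_apply, Complex.log_re, Complex.log_im]
      ring
    have hfin : (‖w * Complex.log w‖) ^ 2 ≤ (2 * Real.log 2) ^ 2 := by
      rw [norm_mul, mul_pow, hlogabs]
      nlinarith [hcore]
    nlinarith [norm_nonneg (w * Complex.log w), hfin, hl2]

/-! ### Properties of the extremal function -/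

lemma fM_eq {M : ℝ} {z : ℂ} (hz : ‖z‖ < 1) :
    fM M z = (1 + 2 * (M:ℂ)) * z + 2 * (M:ℂ) * ((1 - z) * Complex.log (1 - z)) := by
  rw [fM, (hasSum_k_complex hz).tsum_eq]
  ring

lemma fM_zero (M : ℝ) : fM M 0 = 0 := by
  rw [fM_eq (by norm_num)]
  simp

lemma fM_lower {M : ℝ} (hM : 0 ≤ M) {z : ℂ} (hz : ‖z‖ < 1) :
    (1 + 2*M) * ‖z‖ - 2*M*(2*Real.log 2) ≤ ‖fM M z‖ := by
  rw [fM_eq hz]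
  have hD : ‖(1 - z) * Complex.log (1 - z)‖ ≤ 2 * Real.log 2 := by
    apply abs_mul_log_le
    have : (1 - z) - 1 = -z := by ring
    rw [this, norm_neg]
    simpa using hz.le
  have htri : ‖(1 + 2*(M:ℂ)) * z‖
      ≤ ‖(1 + 2*(M:ℂ)) * z + 2 * (M:ℂ) * ((1 - z) * Complex.log (1 - z))‖
        + ‖2 * (M:ℂ) * ((1 - z) * Complex.log (1 - z))‖ := by
    have h := norm_sub_norm_le ((1 + 2*(M:ℂ)) * z)
      (-(2 * (M:ℂ) * ((1 - z) * Complex.log (1 - z))))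
    simp only [sub_neg_eq_add, norm_neg] at h
    linarith
  have h1 : ‖(1 + 2*(M:ℂ)) * z‖ = (1 + 2*M) * ‖z‖ := by
    rw [norm_mul]
    congr 1
    have : (1 + 2*(M:ℂ)) = ((1 + 2*M : ℝ) : ℂ) := by push_cast; ring
    rw [this, Complex.norm_real, Real.norm_eq_abs, abs_of_nonneg (by linarith)]
  have h2 : ‖2 * (M:ℂ) * ((1 - z) * Complex.log (1 - z))‖
      ≤ 2*M*(2*Real.log 2) := by
    rw [norm_mul, norm_mul, Complex.norm_two, Complex.norm_real, Real.norm_eq_abs, abs_of_nonneg hM]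
    calc 2 * M * ‖(1 - z) * Complex.log (1 - z)‖ ≤ 2 * M * (2 * Real.log 2) := by
          apply mul_le_mul_of_nonneg_left hD (by linarith)
      _ = 2*M*(2*Real.log 2) := by ring
  linarith [h1 ▸ htri]

lemma fM_upper {M : ℝ} (hM : 0 ≤ M) {z : ℂ} (hz : ‖z‖ < 1) :
    ‖fM M z‖ ≤ (1 + 2*M) * ‖z‖ + 2*M*(2*Real.log 2) := by
  rw [fM_eq hz]
  have hD : ‖(1 - z) * Complex.log (1 - z)‖ ≤ 2 * Real.log 2 := by
    apply abs_mul_log_le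
    have : (1 - z) - 1 = -z := by ring
    rw [this, norm_neg]
    simpa using hz.le
  calc ‖(1 + 2*(M:ℂ)) * z + 2 * (M:ℂ) * ((1 - z) * Complex.log (1 - z))‖
      ≤ ‖(1 + 2*(M:ℂ)) * z‖
        + ‖2 * (M:ℂ) * ((1 - z) * Complex.log (1 - z))‖ :=
        norm_add_le _ _
    _ ≤ (1 + 2*M) * ‖z‖ + 2*M*(2*Real.log 2) := by
        have h1 : ‖(1 + 2*(M:ℂ)) * z‖ = (1 + 2*M) * ‖z‖ := by
          rw [norm_mul]
          congr 1
          have : (1 + 2*(M:ℂ)) = ((1 + 2*M : ℝ) : ℂ) := by push_cast; ring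
          rw [this, Complex.norm_real, Real.norm_eq_abs, abs_of_nonneg (by linarith)]
        have h2 : ‖2 * (M:ℂ) * ((1 - z) * Complex.log (1 - z))‖
            ≤ 2*M*(2*Real.log 2) := by
          rw [norm_mul, norm_mul, Complex.norm_two, Complex.norm_real, Real.norm_eq_abs, abs_of_nonneg hM]
          apply mul_le_mul_of_nonneg_left hD (by linarith)
        linarith

lemma fM_neg_r {M r : ℝ} (h0 : 0 ≤ r) (h1 : r < 1) :
    ‖fM M (-(r:ℂ))‖ = |(1 + 2*M) * r - 2*M*((1+r) * Real.log (1+r))| := by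
  have hz : ‖(-(r:ℂ))‖ < 1 := by
    rw [norm_neg, Complex.norm_real, Real.norm_eq_abs, abs_of_nonneg h0]
    exact h1
  rw [fM_eq hz]
  have he : (1 : ℂ) - (-(r:ℂ)) = ((1 + r : ℝ) : ℂ) := by push_cast; ring
  rw [he, ← Complex.ofReal_log (by linarith : (0:ℝ) ≤ 1 + r)]
  have h3 : (1 + 2*(M:ℂ)) * (-(r:ℂ)) + 2 * (M:ℂ) * (((1+r:ℝ):ℂ) * ((Real.log (1+r) : ℝ):ℂ))
      = ((-((1 + 2*M) * r - 2*M*((1+r) * Real.log (1+r))) : ℝ) : ℂ) := by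
    push_cast
    ring
  rw [h3, Complex.norm_real, Real.norm_eq_abs, abs_neg]

lemma eps_le {a b : ℝ} (h : ∀ ε : ℝ, 0 < ε → a ≤ b + ε) : a ≤ b := by
  by_contra hc
  push_neg at hc
  have := h ((a - b)/2) (by linarith)
  linarith

/-- The boundary distance of the extremal function. -/
lemma bdy_eq {M : ℝ} (hM : 0 < M) (hd : 0 < 1 + 2*M - 2*M*(2*Real.log 2)) :
    bdyDist (fM M) = 1 + 2*M - 2*M*(2*Real.log 2) := by
  rw [bdyDist]
  set d : ℝ := 1 + 2*M - 2*M*(2*Real.log 2) with hdd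
  set F : Filter ℝ := nhdsWithin 1 (Set.Iio 1) with hF
  set Lf : Filter ℂ := Filter.comap (fun z : ℂ => ‖z‖) F with hLf
  set u : ℂ → ℝ := fun z : ℂ => ‖fM M z - fM M 0‖ with huu
  have hu : ∀ z, u z = ‖fM M z‖ := by
    intro z; rw [huu]; simp only [fM_zero, sub_zero]
  have hFne : F.NeBot := by rw [hF]; infer_instance
  have hIoo : ∀ᶠ r in F, r ∈ Set.Ioo (0:ℝ) 1 :=
    Ioo_mem_nhdsLT_of_mem (by norm_num : (1:ℝ) ∈ Set.Ioc (0:ℝ) 1)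
  have hmapT : Filter.Tendsto (fun r : ℝ => -(r:ℂ)) F Lf := by
    rw [hLf, Filter.tendsto_comap_iff]
    have hev : (fun r : ℝ => r) =ᶠ[F] fun r : ℝ => ‖-(r:ℂ)‖ := by
      filter_upwards [hIoo] with r hr
      rw [norm_neg, Complex.norm_real, Real.norm_eq_abs, abs_of_nonneg hr.1.le]
    exact Filter.Tendsto.congr' hev tendsto_id
  have hLne : Lf.NeBot := Filter.neBot_of_le hmapT
  have hball : ∀ᶠ z in Lf, ‖z‖ ∈ Set.Ioo (0:ℝ) 1 := by
    rw [hLf]; exact Filter.preimage_mem_comap hIoo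
  have hbddAbove : Filter.IsBoundedUnder (· ≤ ·) Lf u := by
    apply Filter.isBoundedUnder_of_eventually_le (a := (1+2*M) + 2*M*(2*Real.log 2))
    filter_upwards [hball] with z hz
    rw [hu]
    have h1 := fM_upper hM.le (z := z) (by exact hz.2)
    have hl2 : (0:ℝ) ≤ Real.log 2 := Real.log_nonneg one_le_two
    nlinarith [hz.2.le, hz.1.le]
  have hbddBelow : Filter.IsBoundedUnder (· ≥ ·) Lf u := by
    apply Filter.isBoundedUnder_of_eventually_ge (a := (0:ℝ))
    exact Filter.Eventually.of_forall fun z => norm_nonneg _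
  apply le_antisymm
  · -- liminf ≤ d
    apply eps_le
    intro ε hε
    have hcont : Filter.Tendsto (fun r : ℝ => |(1 + 2*M) * r - 2*M*((1+r) * Real.log (1+r))|)
        (nhdsWithin 1 (Set.Iio 1)) (nhds d) := by
      have hca : ContinuousAt (fun r : ℝ => |(1 + 2*M) * r - 2*M*((1+r) * Real.log (1+r))|) 1 := by
        apply ContinuousAt.abs
        apply ContinuousAt.sub
        · fun_prop
        · apply ContinuousAt.mul continuousAt_const
          apply ContinuousAt.mul (by fun_prop)
          exact (Real.continuousAt_log (by norm_num)).comp (by fun_prop)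
      have hval : |(1 + 2*M) * 1 - 2*M*((1+1) * Real.log (1+1))| = d := by
        have hx : (1 + 2*M) * 1 - 2*M*((1+1) * Real.log (1+1)) = d := by
          rw [hdd]; norm_num
        rw [hx, abs_of_pos hd]
      have h5 := hca.tendsto.mono_left (nhdsWithin_le_nhds (s := Set.Iio 1))
      rwa [hval] at h5
    have hψ : ∀ᶠ r in F, |(1 + 2*M) * r - 2*M*((1+r) * Real.log (1+r))| < d + ε :=
      hcont.eventually_lt_const (by linarith)
    have hfreqF : ∀ᶠ (r : ℝ) in F, u (-(r:ℂ)) ≤ d + ε := by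
      filter_upwards [hψ, hIoo] with r h1 h2
      rw [hu, fM_neg_r h2.1.le h2.2]
      linarith
    have hfreqL : ∃ᶠ z in Lf, u z ≤ d + ε := hmapT.frequently hfreqF.frequently
    exact Filter.liminf_le_of_frequently_le hfreqL hbddBelow
  · -- d ≤ liminf
    apply eps_le
    intro ε hε
    have h2M : (0:ℝ) < 1 + 2*M := by linarith
    set δ : ℝ := min (ε / (1 + 2*M)) (1/2) with hδd
    have hδ0 : 0 < δ := lt_min (by positivity) (by norm_num)
    have hδε : (1 + 2*M) * δ ≤ ε := by
      have h7 : δ ≤ ε / (1 + 2*M) := min_le_left _ _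
      rw [le_div_iff₀ h2M] at h7
      linarith
    have hevF : ∀ᶠ r in F, r ∈ Set.Ioo (1 - δ) 1 :=
      Ioo_mem_nhdsLT (by linarith)
    have hevL : ∀ᶠ z in Lf, ‖z‖ ∈ Set.Ioo (1 - δ) 1 := by
      rw [hLf]; exact Filter.preimage_mem_comap hevF
    have hev2 : ∀ᶠ z in Lf, d - ε ≤ u z := by
      filter_upwards [hevL] with z hz
      rw [hu]
      have h1 := fM_lower hM.le (z := z) (by exact hz.2)
      have h3 : (1 + 2*M) * (1 - δ) ≤ (1 + 2*M) * ‖z‖ :=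
        mul_le_mul_of_nonneg_left hz.1.le (by linarith)
      have h4 : (1 + 2*M) * (1 - δ) = (1 + 2*M) - (1 + 2*M) * δ := by ring
      linarith
    have h8 := Filter.le_liminf_of_le (hbddAbove.isCoboundedUnder_ge) hev2
    linarith

/-- Sharpness of Theorem 3.3: equality for the extremal function `f_M`. -/
theorem improved_bohr_coeff_sharp (M : ℝ) (hM : 0 < M)
    (r₀ : ℝ) (hr₀ : r₀ ∈ Set.Ioo (0 : ℝ) 1)
    (hroot : r₀ - 1 + 2 * M * (2 * M + 1) * (r₀ + (1 - r₀) * Real.log (1 - r₀))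
      - 2 * M * (1 - 2 * Real.log 2) = 0) :
    (r₀ + ∑' n : ℕ, (2 * M / (((n : ℝ) + 2) * ((n : ℝ) + 1))
          + ((n : ℝ) + 2) * ((n : ℝ) + 1)
            * (2 * M / (((n : ℝ) + 2) * ((n : ℝ) + 1))) ^ 2) * r₀ ^ (n + 2)
      = 1 + 2 * M * (1 - 2 * Real.log 2)) ∧
    bdyDist (fM M) = 1 + 2 * M * (1 - 2 * Real.log 2) := by
  obtain ⟨hr0, hr1⟩ := hr₀
  constructor
  · -- Part 1: the coefficient sum identity
    have hx : |r₀| < 1 := by rw [abs_of_pos hr0]; exact hr1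
    have hk := hasSum_k_real hx
    have h := hk.mul_left (2*M*(2*M+1))
    have hfg : (fun n : ℕ => (2 * M / (((n : ℝ) + 2) * ((n : ℝ) + 1))
          + ((n : ℝ) + 2) * ((n : ℝ) + 1)
            * (2 * M / (((n : ℝ) + 2) * ((n : ℝ) + 1))) ^ 2) * r₀ ^ (n + 2))
        = fun n : ℕ => (2*M*(2*M+1)) * (r₀ ^ (n + 2) / (((n : ℝ) + 2) * ((n : ℝ) + 1))) := by
      funext n
      have h1 : ((n:ℝ)+1) ≠ 0 := by positivity
      have h2 : ((n:ℝ)+2) ≠ 0 := by positivity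
      field_simp
      ring
    rw [hfg, h.tsum_eq]
    linarith [hroot]
  · -- Part 2: the boundary distance
    have hE : 0 < r₀ + (1 - r₀) * Real.log (1 - r₀) := by
      have h1 : 0 < 1 - r₀ := by linarith
      have hne : (1 - r₀)⁻¹ ≠ 1 := by
        have : 1 < (1 - r₀)⁻¹ := by
          rw [lt_inv_comm₀ (by norm_num) h1] <;> try linarith
        · exact ne_of_gt this
      have h2 : Real.log (1 - r₀)⁻¹ < (1 - r₀)⁻¹ - 1 :=
        Real.log_lt_sub_one_of_pos (by positivity) hne
      rw [Real.log_inv] at h2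
      have h3 : (1 - r₀) * (-Real.log (1 - r₀)) < (1 - r₀) * ((1-r₀)⁻¹ - 1) :=
        mul_lt_mul_of_pos_left h2 h1
      have h4 : (1 - r₀) * ((1-r₀)⁻¹ - 1) = r₀ := by field_simp; ring
      nlinarith
    have hd : 0 < 1 + 2*M - 2*M*(2*Real.log 2) := by
      have h5 : (0:ℝ) < 2*M*(2*M+1) := by nlinarith
      have h6 := mul_pos h5 hE
      nlinarith [hroot]
    rw [bdy_eq hM hd]
    ring
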